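/- If ω : [0,∞) → M is continuous and precompact, and U is a set containing Ω⁺[ω], then ‖ω‖_aa ≤ |U|_c, where |U|_c is the supremum of diameters of connected components of U. -/

import Mathlib

open Filter
open scoped NNReal ENNReal

/-- Asymptotic amplitude of a signal. -/
noncomputable def asympAmp {M : Type*} [PseudoMetricSpace M] (ω : ℝ≥0 → M) : ℝ≥0∞ :=
  Filter.limsup (fun p : ℝ≥0 × ℝ≥0 => edist (ω p.1) (ω p.2)) (atTop ×ˢ atTop)

/-- The omega-limit set `Ω⁺[ω]` of a signal `ω : ℝ≥0 → M`. -/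
def omegaLim {M : Type*} [MetricSpace M] (ω : ℝ≥0 → M) : Set M :=
  {u | ∃ t : ℕ → ℝ≥0, Tendsto t atTop atTop ∧ Tendsto (fun n => ω (t n)) atTop (nhds u)}

/-- `ω` is precompact: its image lies in a compact set. -/
def Precompact {M : Type*} [MetricSpace M] (ω : ℝ≥0 → M) : Prop :=
  ∃ K : Set M, IsCompact K ∧ ∀ t, ω t ∈ K

/-- Supremum of the diameters of the connected components of a set. -/
noncomputable def compDiam {M : Type*} [MetricSpace M] (U : Set M) : ℝ≥0∞ :=
  ⨆ x ∈ U, EMetric.diam (connectedComponentIn U x)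

/-- For continuous precompact `ω` with `Ω⁺[ω] ⊆ U`, one has `‖ω‖_aa ≤ |U|_c`. -/
theorem stmt11 {M : Type*} [MetricSpace M] (ω : ℝ≥0 → M) (U : Set M)
    (hω : Precompact ω) (hc : Continuous ω) (hU : omegaLim ω ⊆ U) :
    asympAmp ω ≤ compDiam U := by
  classical
  obtain ⟨K, hK, hmem⟩ := hω
  set Ω : Set M := omegaLim ω with hΩdef
  set E : ℕ → Set M := fun n => closure (ω '' Set.Ici (n : ℝ≥0)) with hE
  have hEK : ∀ n, E n ⊆ K := fun n =>
    closure_minimal (by rintro x ⟨t, _, rfl⟩; exact hmem t) hK.isClosed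
  have hEclosed : ∀ n, IsClosed (E n) := fun n => isClosed_closure
  have hEcompact : ∀ n, IsCompact (E n) := fun n =>
    hK.of_isClosed_subset (hEclosed n) (hEK n)
  have hEanti : Antitone E := fun m n hmn =>
    closure_mono (Set.image_mono (Set.Ici_subset_Ici.mpr (by exact_mod_cast hmn)))
  have hEdir : Directed (· ⊇ ·) E := fun m n =>
    ⟨max m n, hEanti (le_max_left m n), hEanti (le_max_right m n)⟩
  have hEne : ∀ n, (E n).Nonempty := fun n =>
    ⟨ω n, subset_closure ⟨(n : ℝ≥0), Set.mem_Ici.mpr le_rfl, rfl⟩⟩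
  -- `Ω` is the intersection of the tail closures.
  have hΩE : Ω = ⋂ n, E n := by
    ext u
    constructor
    · rintro ⟨t, ht, hconv⟩
      refine Set.mem_iInter.2 fun n => ?_
      exact mem_closure_of_tendsto hconv
        ((ht.eventually_ge_atTop (n : ℝ≥0)).mono fun m hm => ⟨t m, hm, rfl⟩)
    · intro hu
      have key : ∀ k : ℕ, ∃ τ : ℝ≥0, (k : ℝ≥0) ≤ τ ∧ edist u (ω τ) < ((k : ℝ≥0∞) + 1)⁻¹ := by
        intro k
        have hk : u ∈ E k := Set.mem_iInter.1 hu k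
        rw [hE, EMetric.mem_closure_iff] at hk
        obtain ⟨y, ⟨τ, hτ, rfl⟩, hy⟩ := hk ((k : ℝ≥0∞) + 1)⁻¹
          (ENNReal.inv_pos.mpr (by simp))
        exact ⟨τ, hτ, hy⟩
      choose τ hτge hτlt using key
      refine ⟨τ, tendsto_atTop_mono hτge tendsto_natCast_atTop_atTop, ?_⟩
      rw [EMetric.tendsto_atTop]
      intro ε hε
      obtain ⟨N, hN⟩ := ENNReal.exists_inv_nat_lt hε.ne'
      refine ⟨N, fun n hn => ?_⟩
      have h1 : ((n : ℝ≥0∞) + 1)⁻¹ ≤ (N : ℝ≥0∞)⁻¹ := by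
        apply ENNReal.inv_le_inv.mpr
        exact_mod_cast le_trans (Nat.cast_le.mpr hn) (le_add_of_nonneg_right zero_le_one)
      calc edist (ω (τ n)) u = edist u (ω (τ n)) := edist_comm _ _
        _ < ((n : ℝ≥0∞) + 1)⁻¹ := hτlt n
        _ ≤ (N : ℝ≥0∞)⁻¹ := h1
        _ < ε := hN
  have hΩne : Ω.Nonempty := by
    rw [hΩE]
    exact IsCompact.nonempty_iInter_of_directed_nonempty_isCompact_isClosed E hEdir hEne
      hEcompact hEclosed
  have hΩK : Ω ⊆ K := by rw [hΩE]; exact (Set.iInter_subset E 0).trans (hEK 0)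
  have hΩclosed : IsClosed Ω := by rw [hΩE]; exact isClosed_iInter hEclosed
  have hΩcompact : IsCompact Ω := hK.of_isClosed_subset hΩclosed hΩK
  -- distance to the omega-limit set tends to zero
  have hg : Tendsto (fun t => EMetric.infEdist (ω t) Ω) atTop (nhds 0) := by
    rw [ENNReal.tendsto_nhds_zero]
    intro ε hε
    have hex : ∃ n : ℕ, ∀ t : ℝ≥0, (n : ℝ≥0) ≤ t → EMetric.infEdist (ω t) Ω ≤ ε := by
      by_contra hcon
      push_neg at hcon
      set F : ℕ → Set M := fun n => E n ∩ {x | ε ≤ EMetric.infEdist x Ω} with hF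
      have hSclosed : IsClosed {x : M | ε ≤ EMetric.infEdist x Ω} :=
        isClosed_le continuous_const EMetric.continuous_infEdist
      have hFne : ∀ n, (F n).Nonempty := by
        intro n
        obtain ⟨t, ht, hlt⟩ := hcon n
        exact ⟨ω t, subset_closure ⟨t, ht, rfl⟩, hlt.le⟩
      have hFc : ∀ n, IsCompact (F n) := fun n => (hEcompact n).inter_right hSclosed
      have hFcl : ∀ n, IsClosed (F n) := fun n => (hEclosed n).inter hSclosed
      have hFdir : Directed (· ⊇ ·) F := fun m n =>
        ⟨max m n, Set.inter_subset_inter_left _ (hEanti (le_max_left m n)),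
          Set.inter_subset_inter_left _ (hEanti (le_max_right m n))⟩
      obtain ⟨x, hx⟩ :=
        IsCompact.nonempty_iInter_of_directed_nonempty_isCompact_isClosed F hFdir hFne hFc hFcl
      have hxΩ : x ∈ Ω := by
        rw [hΩE, Set.mem_iInter]
        exact fun n => (Set.mem_iInter.1 hx n).1
      have : ε ≤ EMetric.infEdist x Ω := (Set.mem_iInter.1 hx 0).2
      replace this : ε ≤ 0 := this.trans_eq (EMetric.infEdist_zero_of_mem hxΩ)
      exact absurd this (by simpa using hε.ne')
    obtain ⟨n, hn⟩ := hex
    rw [eventually_atTop]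
    exact ⟨(n : ℝ≥0), hn⟩
  -- the omega-limit set is preconnected
  have hΩconn : IsPreconnected Ω := by
    intro V W hV hW hVW hΩV hΩW
    by_contra hne
    rw [Set.not_nonempty_iff_eq_empty] at hne
    obtain ⟨a, haΩ, haV⟩ := hΩV
    obtain ⟨b, hbΩ, hbW⟩ := hΩW
    set A : Set M := Ω \ W with hA
    set B : Set M := Ω \ V with hB
    have haA : a ∈ A := ⟨haΩ, fun hw => by
      have : a ∈ Ω ∩ (V ∩ W) := ⟨haΩ, haV, hw⟩
      simp [hne] at this⟩
    have hbB : b ∈ B := ⟨hbΩ, fun hv => by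
      have : b ∈ Ω ∩ (V ∩ W) := ⟨hbΩ, hv, hbW⟩
      simp [hne] at this⟩
    have hAclosed : IsClosed A := hΩclosed.sdiff hW
    have hBclosed : IsClosed B := hΩclosed.sdiff hV
    have hAcompact : IsCompact A := hK.of_isClosed_subset hAclosed
      ((Set.diff_subset).trans hΩK)
    have hABdisj : Disjoint A B := by
      rw [Set.disjoint_left]
      rintro x ⟨hxΩ, hxW⟩ ⟨_, hxV⟩
      rcases hVW hxΩ with h | h
      exacts [hxV h, hxW h]
    have hABΩ : A ∪ B = Ω := by
      apply Set.Subset.antisymm (Set.union_subset Set.diff_subset Set.diff_subset)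
      intro x hx
      rcases hVW hx with h | h
      · left
        exact ⟨hx, fun hw => by
          have : x ∈ Ω ∩ (V ∩ W) := ⟨hx, h, hw⟩
          simp [hne] at this⟩
      · right
        exact ⟨hx, fun hv => by
          have : x ∈ Ω ∩ (V ∩ W) := ⟨hx, hv, h⟩
          simp [hne] at this⟩
    obtain ⟨δ, hδ, hthick⟩ := hABdisj.exists_thickenings hAcompact hBclosed
    have hδ' : (0 : ℝ≥0∞) < ENNReal.ofReal δ := ENNReal.ofReal_pos.mpr hδ
    have hev : ∀ᶠ t : ℝ≥0 in atTop, EMetric.infEdist (ω t) Ω < ENNReal.ofReal δ :=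
      hg.eventually_lt_const hδ'
    rw [eventually_atTop] at hev
    obtain ⟨T, hT⟩ := hev
    have hconn : IsPreconnected (ω '' Set.Ici T) :=
      isPreconnected_Ici.image ω hc.continuousOn
    -- points of the tail near `a` and `b`
    have hnear : ∀ (s : Set M), ∀ x ∈ s, x ∈ Ω →
        ∃ τ : ℝ≥0, T ≤ τ ∧ ω τ ∈ Metric.thickening δ s := by
      intro s x hxs hx
      obtain ⟨n, hn⟩ := exists_nat_ge T
      have hxE : x ∈ E n := by rw [hΩE] at hx; exact Set.mem_iInter.1 hx n
      rw [hE, EMetric.mem_closure_iff] at hxE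
      obtain ⟨y, ⟨τ, hτ, rfl⟩, hy⟩ := hxE (ENNReal.ofReal δ) hδ'
      refine ⟨τ, hn.trans hτ, ?_⟩
      rw [Metric.mem_thickening_iff_infEdist_lt]
      calc EMetric.infEdist (ω τ) s ≤ edist (ω τ) x := EMetric.infEdist_le_edist_of_mem hxs
        _ = edist x (ω τ) := edist_comm _ _
        _ < ENNReal.ofReal δ := hy
    obtain ⟨τa, hτa, hτaA⟩ := hnear A a haA haΩ
    obtain ⟨τb, hτb, hτbB⟩ := hnear B b hbB hbΩ
    have hsub : ω '' Set.Ici T ⊆ Metric.thickening δ A ∪ Metric.thickening δ B := by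
      rintro _ ⟨t, ht, rfl⟩
      have hlt : EMetric.infEdist (ω t) Ω < ENNReal.ofReal δ := hT t ht
      rw [← hABΩ] at hlt
      change Metric.infEDist (ω t) (A ∪ B) < _ at hlt
      rw [EMetric.infEdist_union, inf_lt_iff] at hlt
      rcases hlt with h | h
      · exact Or.inl (Metric.mem_thickening_iff_infEdist_lt.mpr h)
      · exact Or.inr (Metric.mem_thickening_iff_infEdist_lt.mpr h)
    obtain ⟨z, -, hzA, hzB⟩ := hconn (Metric.thickening δ A) (Metric.thickening δ B)
      Metric.isOpen_thickening Metric.isOpen_thickening hsub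
      ⟨ω τa, ⟨τa, hτa, rfl⟩, hτaA⟩ ⟨ω τb, ⟨τb, hτb, rfl⟩, hτbB⟩
    exact hthick.le_bot ⟨hzA, hzB⟩
  -- conclusion
  obtain ⟨x₀, hx₀⟩ := hΩne
  have hcomp : Ω ⊆ connectedComponentIn U x₀ :=
    hΩconn.subset_connectedComponentIn hx₀ hU
  have hD : EMetric.diam Ω ≤ compDiam U :=
    le_trans (EMetric.diam_mono hcomp)
      (le_iSup₂ (f := fun x (_ : x ∈ U) => EMetric.diam (connectedComponentIn U x)) x₀ (hU hx₀))
  have hDne : EMetric.diam Ω ≠ ⊤ :=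
    Metric.isBounded_iff_ediam_ne_top.mp hΩcompact.isBounded
  -- pointwise bound
  have key : ∀ p : ℝ≥0 × ℝ≥0, edist (ω p.1) (ω p.2) ≤
      EMetric.infEdist (ω p.1) Ω + EMetric.diam Ω + EMetric.infEdist (ω p.2) Ω := by
    intro p
    set x := ω p.1
    set z := ω p.2
    have step : ∀ y ∈ Ω, edist x z ≤
        (EMetric.infEdist x Ω + EMetric.diam Ω) + edist z y := fun y hy =>
      (edist_triangle x y z).trans (by
        have h1 : edist x y ≤ EMetric.infEdist x Ω + EMetric.diam Ω :=
          EMetric.edist_le_infEdist_add_ediam hy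
        have h2 : edist y z = edist z y := edist_comm _ _
        rw [h2] at *
        exact add_le_add_left h1 _)
    calc edist x z ≤ ⨅ y ∈ Ω, ((EMetric.infEdist x Ω + EMetric.diam Ω) + edist z y) :=
          le_iInf₂ step
      _ = (EMetric.infEdist x Ω + EMetric.diam Ω) + ⨅ y ∈ Ω, edist z y := by
          simp_rw [← ENNReal.add_iInf]
      _ = EMetric.infEdist x Ω + EMetric.diam Ω + EMetric.infEdist z Ω := rfl
  -- compare limsups
  have h1 : Tendsto (fun p : ℝ≥0 × ℝ≥0 => EMetric.infEdist (ω p.1) Ω)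
      (atTop ×ˢ atTop) (nhds 0) := hg.comp tendsto_fst
  have h2 : Tendsto (fun p : ℝ≥0 × ℝ≥0 => EMetric.infEdist (ω p.2) Ω)
      (atTop ×ˢ atTop) (nhds 0) := hg.comp tendsto_snd
  have hlim : Tendsto (fun p : ℝ≥0 × ℝ≥0 => EMetric.infEdist (ω p.1) Ω + EMetric.diam Ω +
      EMetric.infEdist (ω p.2) Ω) (atTop ×ˢ atTop) (nhds (EMetric.diam Ω)) := by
    simpa using (h1.add tendsto_const_nhds).add h2
  calc asympAmp ω ≤ limsup (fun p : ℝ≥0 × ℝ≥0 => EMetric.infEdist (ω p.1) Ω + EMetric.diam Ω +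
        EMetric.infEdist (ω p.2) Ω) (atTop ×ˢ atTop) :=
        limsup_le_limsup (Eventually.of_forall key)
    _ = EMetric.diam Ω := hlim.limsup_eq
    _ ≤ compDiam U := hD
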